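/- Vanishing of angular-momentum flux through half-circles: Let n ≥ 2 and let u be a smooth harmonic map with free boundary on 𝔻⁺ ∪ I with values in ℝ^{n+1}. Then for all 1 ≤ i, j ≤ n+1 and all 0 < r < 1, the flux of the vector field u_j ∇u_i − u_i ∇u_j through the half-circle ∂𝔻_r⁺ = {z ∈ ℝ² : |z| = r, t ≥ 0} vanishes: ∫₀^π (u_j ∂_ρ u_i − u_i ∂_ρ u_j)(r cos θ, r sin θ) r dθ = 0, where ∂_ρ denotes the radial directional derivative. -/

import Mathlib

open MeasureTheory Filter Topology Set
open scoped RealInnerProductSpace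

noncomputable section

/-- The Euclidean plane. -/
abbrev E2 : Type := EuclideanSpace ℝ (Fin 2)
/-- Euclidean space `ℝ^{n+1}`. -/
abbrev Ey (n : ℕ) : Type := EuclideanSpace ℝ (Fin (n + 1))

/-- Standard basis vectors of the plane. -/
def e2 (i : Fin 2) : E2 := EuclideanSpace.single i 1

/-- The point of the plane with coordinates `(s, t)`. -/
def pt (s t : ℝ) : E2 := WithLp.toLp 2 ![s, t]

/-- The Laplacian of a map on the plane. -/
def lapl {F : Type*} [NormedAddCommGroup F] [NormedSpace ℝ F] (u : E2 → F) (x : E2) : F :=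
  ∑ i : Fin 2, fderiv ℝ (fun y => fderiv ℝ u y (e2 i)) x (e2 i)

/-- The squared (Frobenius) norm `|∇u|² = Σ_j |∇u_j|²` of the gradient. -/
def gradSq {F : Type*} [NormedAddCommGroup F] [NormedSpace ℝ F] (u : E2 → F) (x : E2) : ℝ :=
  ∑ i : Fin 2, ‖fderiv ℝ u x (e2 i)‖ ^ 2

/-- The open half-disc `𝔻⁺_ρ` of radius `ρ`. -/
def halfDisc (ρ : ℝ) : Set E2 := {x | x 0 ^ 2 + x 1 ^ 2 < ρ ^ 2 ∧ 0 < x 1}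

/-- The closed half-disc of radius `ρ`. -/
def closedHalfDisc (ρ : ℝ) : Set E2 := {x | x 0 ^ 2 + x 1 ^ 2 ≤ ρ ^ 2 ∧ 0 ≤ x 1}

/-- The boundary segment `I = (-1,1) × {0}`. -/
def Iseg : Set E2 := {x | |x 0| < 1 ∧ x 1 = 0}

/-- A smooth harmonic map with free boundary on `𝔻⁺ ∪ I`, i.e. a map smooth on a
neighbourhood of the closed half-disc, harmonic in `𝔻⁺`, with values in the closed unit
ball, unit norm on `I`, where `∂_t u` is parallel to `u` on `I`. -/
structure IsFBHarmonic (n : ℕ) (u : E2 → Ey n) : Prop where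
  smooth : ∃ V : Set E2, IsOpen V ∧ closedHalfDisc 1 ⊆ V ∧ ContDiffOn ℝ (⊤ : ℕ∞) u V
  harmonic : ∀ x ∈ halfDisc 1, lapl u x = 0
  norm_le : ∀ x ∈ closedHalfDisc 1, ‖u x‖ ≤ 1
  norm_eq : ∀ x ∈ Iseg, ‖u x‖ = 1
  free : ∀ x ∈ Iseg, ∃ c : ℝ, fderiv ℝ u x (e2 1) = c • u x

/-- The radial directional derivative `∂_ρ u(z) = (z/|z|) ⬝ ∇u(z)`. -/
def radialDeriv {n : ℕ} (u : E2 → Ey n) (z : E2) : Ey n :=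
  fderiv ℝ u z (‖z‖⁻¹ • z)

/-! ### Auxiliary definitions and lemmas -/

/-- Polar coordinates map. -/
def zp (p : ℝ × ℝ) : E2 := pt (p.1 * Real.cos p.2) (p.1 * Real.sin p.2)

/-- Components of the angular-momentum flux vector field. -/
def Pf {n : ℕ} (u : E2 → Ey n) (i j : Fin (n+1)) (k : Fin 2) (x : E2) : ℝ :=
  u x j * fderiv ℝ u x (e2 k) i - u x i * fderiv ℝ u x (e2 k) j

/-- Radial flux density in polar coordinates. -/
def ff {n : ℕ} (u : E2 → Ey n) (i j : Fin (n+1)) (p : ℝ × ℝ) : ℝ :=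
  (Real.cos p.2 * Pf u i j 0 (zp p) + Real.sin p.2 * Pf u i j 1 (zp p)) * p.1

/-- Angular flux density in polar coordinates. -/
def gg {n : ℕ} (u : E2 → Ey n) (i j : Fin (n+1)) (p : ℝ × ℝ) : ℝ :=
  -Real.sin p.2 * Pf u i j 0 (zp p) + Real.cos p.2 * Pf u i j 1 (zp p)

theorem pt_eq (s t : ℝ) : pt s t = s • e2 0 + t • e2 1 := by
  ext k
  fin_cases k <;>
    simp [pt, e2, PiLp.add_apply, PiLp.smul_apply, EuclideanSpace.single_apply]

theorem norm_pt (s t : ℝ) : ‖pt s t‖ = Real.sqrt (s^2 + t^2) := by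
  simp [EuclideanSpace.norm_eq, pt, Fin.sum_univ_two]

theorem smul_pt (c s t : ℝ) : c • pt s t = pt (c*s) (c*t) := by
  ext k; fin_cases k <;> simp [pt, PiLp.smul_apply]

theorem hasFDerivAt_Pf {n : ℕ} {u : E2 → Ey n} {V : Set E2} (hV : IsOpen V)
    (hsm : ContDiffOn ℝ (⊤ : ℕ∞) u V) (i j : Fin (n+1)) (k : Fin 2) {x : E2} (hx : x ∈ V) :
    ∃ L : E2 →L[ℝ] ℝ, HasFDerivAt (Pf u i j k) L x ∧ ∀ w : E2,
      L w = fderiv ℝ u x w j * fderiv ℝ u x (e2 k) i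
          + u x j * fderiv ℝ (fderiv ℝ u) x w (e2 k) i
          - (fderiv ℝ u x w i * fderiv ℝ u x (e2 k) j
          + u x i * fderiv ℝ (fderiv ℝ u) x w (e2 k) j) := by
  have hca : ContDiffAt ℝ (⊤ : ℕ∞) u x := hsm.contDiffAt (hV.mem_nhds hx)
  have hdu : DifferentiableAt ℝ u x := hca.differentiableAt (by simp)
  have hdfd : DifferentiableAt ℝ (fderiv ℝ u) x := by
    have : ContDiffAt ℝ 1 (fderiv ℝ u) x := hca.fderiv_right (m := 1) (by norm_cast)
    exact this.differentiableAt one_ne_zero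
  have hA : HasFDerivAt u (fderiv ℝ u x) x := hdu.hasFDerivAt
  have hB : HasFDerivAt (fderiv ℝ u) (fderiv ℝ (fderiv ℝ u) x) x := hdfd.hasFDerivAt
  have hcoord : ∀ m : Fin (n+1), HasFDerivAt (fun y => u y m)
      ((EuclideanSpace.proj m : Ey n →L[ℝ] ℝ).comp (fderiv ℝ u x)) x := fun m =>
    (EuclideanSpace.proj m : Ey n →L[ℝ] ℝ).hasFDerivAt.comp x hA
  have hsec : HasFDerivAt (fun y => fderiv ℝ u y (e2 k))
      ((fderiv ℝ (fderiv ℝ u) x).flip (e2 k)) x := by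
    have := hB.clm_apply (hasFDerivAt_const (e2 k) x)
    simpa using this
  have hseccoord : ∀ m : Fin (n+1), HasFDerivAt (fun y => fderiv ℝ u y (e2 k) m)
      ((EuclideanSpace.proj m : Ey n →L[ℝ] ℝ).comp
        ((fderiv ℝ (fderiv ℝ u) x).flip (e2 k))) x := fun m =>
    (EuclideanSpace.proj m : Ey n →L[ℝ] ℝ).hasFDerivAt.comp x hsec
  have h1 := ((hcoord j).mul (hseccoord i)).sub ((hcoord i).mul (hseccoord j))
  refine ⟨_, h1, fun w => ?_⟩
  simp [ContinuousLinearMap.add_apply, ContinuousLinearMap.sub_apply,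
    ContinuousLinearMap.smul_apply, ContinuousLinearMap.comp_apply,
    ContinuousLinearMap.flip_apply, smul_eq_mul]
  ring

theorem lapl_eq {n : ℕ} {u : E2 → Ey n} {V : Set E2} (hV : IsOpen V)
    (hsm : ContDiffOn ℝ (⊤ : ℕ∞) u V) {x : E2} (hx : x ∈ V) :
    lapl u x = fderiv ℝ (fderiv ℝ u) x (e2 0) (e2 0)
             + fderiv ℝ (fderiv ℝ u) x (e2 1) (e2 1) := by
  have hca : ContDiffAt ℝ (⊤ : ℕ∞) u x := hsm.contDiffAt (hV.mem_nhds hx)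
  have hdfd : DifferentiableAt ℝ (fderiv ℝ u) x := by
    have : ContDiffAt ℝ 1 (fderiv ℝ u) x := hca.fderiv_right (m := 1) (by norm_cast)
    exact this.differentiableAt one_ne_zero
  have hB : HasFDerivAt (fderiv ℝ u) (fderiv ℝ (fderiv ℝ u) x) x := hdfd.hasFDerivAt
  have hsec : ∀ k : Fin 2, fderiv ℝ (fun y => fderiv ℝ u y (e2 k)) x
      = (fderiv ℝ (fderiv ℝ u) x).flip (e2 k) := by
    intro k
    have := hB.clm_apply (hasFDerivAt_const (e2 k) x)
    have h2 : HasFDerivAt (fun y => fderiv ℝ u y (e2 k))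
        ((fderiv ℝ (fderiv ℝ u) x).flip (e2 k)) x := by simpa using this
    exact h2.fderiv
  simp [lapl, Fin.sum_univ_two, hsec]

theorem hasFDerivAt_zp (p : ℝ × ℝ) :
    HasFDerivAt zp
      (((p.1 • ((-Real.sin p.2) • (ContinuousLinearMap.snd ℝ ℝ ℝ))
          + Real.cos p.2 • (ContinuousLinearMap.fst ℝ ℝ ℝ)).smulRight (e2 0))
        + ((p.1 • (Real.cos p.2 • (ContinuousLinearMap.snd ℝ ℝ ℝ))
          + Real.sin p.2 • (ContinuousLinearMap.fst ℝ ℝ ℝ)).smulRight (e2 1))) p := by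
  have hcos : HasFDerivAt (fun q : ℝ × ℝ => Real.cos q.2)
      ((-Real.sin p.2) • (ContinuousLinearMap.snd ℝ ℝ ℝ)) p :=
    (Real.hasDerivAt_cos p.2).comp_hasFDerivAt p hasFDerivAt_snd
  have hsin : HasFDerivAt (fun q : ℝ × ℝ => Real.sin q.2)
      (Real.cos p.2 • (ContinuousLinearMap.snd ℝ ℝ ℝ)) p :=
    (Real.hasDerivAt_sin p.2).comp_hasFDerivAt p hasFDerivAt_snd
  have ha := (hasFDerivAt_fst (𝕜 := ℝ) (E := ℝ) (F := ℝ) (p := p)).mul hcos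
  have hb := (hasFDerivAt_fst (𝕜 := ℝ) (E := ℝ) (F := ℝ) (p := p)).mul hsin
  have := (ha.smul_const (e2 0)).add (hb.smul_const (e2 1))
  exact this.congr_of_eventuallyEq (Filter.Eventually.of_forall fun q => by
    exact pt_eq _ _)

theorem polar_div {n : ℕ} (u : E2 → Ey n) (i j : Fin (n+1)) {p : ℝ × ℝ}
    {L0 L1 : E2 →L[ℝ] ℝ}
    (h0 : HasFDerivAt (Pf u i j 0) L0 (zp p)) (h1 : HasFDerivAt (Pf u i j 1) L1 (zp p)) :
    ∃ Lf Lg : ℝ × ℝ →L[ℝ] ℝ, HasFDerivAt (ff u i j) Lf p ∧ HasFDerivAt (gg u i j) Lg p ∧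
      Lf (1, 0) + Lg (0, 1) = p.1 * (L0 (e2 0) + L1 (e2 1)) := by
  obtain ⟨s, y⟩ := p
  have hcos : HasFDerivAt (fun q : ℝ × ℝ => Real.cos q.2)
      ((-Real.sin y) • (ContinuousLinearMap.snd ℝ ℝ ℝ)) (s, y) :=
    (Real.hasDerivAt_cos y).comp_hasFDerivAt (f := fun q : ℝ × ℝ => q.2) (s, y)
      (hasFDerivAt_snd (𝕜 := ℝ) (E := ℝ) (F := ℝ) (p := (s, y)))
  have hsin : HasFDerivAt (fun q : ℝ × ℝ => Real.sin q.2)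
      (Real.cos y • (ContinuousLinearMap.snd ℝ ℝ ℝ)) (s, y) :=
    (Real.hasDerivAt_sin y).comp_hasFDerivAt (f := fun q : ℝ × ℝ => q.2) (s, y)
      (hasFDerivAt_snd (𝕜 := ℝ) (E := ℝ) (F := ℝ) (p := (s, y)))
  have hz := hasFDerivAt_zp (s, y)
  have hP0 := h0.comp (s, y) hz
  have hP1 := h1.comp (s, y) hz
  have hh := (hcos.mul hP0).add (hsin.mul hP1)
  have hff : HasFDerivAt (ff u i j) _ (s, y) := hh.mul hasFDerivAt_fst
  have hgg : HasFDerivAt (gg u i j) _ (s, y) := ((hsin.neg).mul hP0).add (hcos.mul hP1)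
  refine ⟨_, _, hff, hgg, ?_⟩
  have e0 : Real.sin y ^ 2 + Real.cos y ^ 2 = 1 := Real.sin_sq_add_cos_sq y
  simp only [ContinuousLinearMap.add_apply, ContinuousLinearMap.smul_apply,
    ContinuousLinearMap.comp_apply, ContinuousLinearMap.smulRight_apply,
    ContinuousLinearMap.coe_fst', ContinuousLinearMap.coe_snd',
    ContinuousLinearMap.neg_apply, smul_eq_mul, map_add, _root_.map_smul, Function.comp,
    ContinuousLinearMap.map_smul, ContinuousLinearMap.map_add, Pi.mul_apply, Pi.add_apply,
    Pi.neg_apply, Function.comp_apply]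
  linear_combination (s * L0 (e2 0) + s * L1 (e2 1)) * e0

theorem continuous_zp : Continuous zp := by
  have : zp = fun p : ℝ × ℝ =>
      (p.1 * Real.cos p.2) • e2 0 + (p.1 * Real.sin p.2) • e2 1 :=
    funext fun p => pt_eq _ _
  rw [this]
  fun_prop

theorem continuousOn_Pf {n : ℕ} {u : E2 → Ey n} {V : Set E2} (hV : IsOpen V)
    (hsm : ContDiffOn ℝ (⊤ : ℕ∞) u V) (i j : Fin (n+1)) (k : Fin 2) :
    ContinuousOn (Pf u i j k) V := by
  have h1 : ContinuousOn (fderiv ℝ u) V :=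
    hsm.continuousOn_fderiv_of_isOpen hV (by exact_mod_cast le_top)
  have h2 : ∀ m : Fin (n+1), ContinuousOn (fun x => fderiv ℝ u x (e2 k) m) V := by
    intro m
    have h3 : ContinuousOn (fun x => fderiv ℝ u x (e2 k)) V :=
      h1.clm_apply continuousOn_const
    exact (EuclideanSpace.proj m : Ey n →L[ℝ] ℝ).continuous.comp_continuousOn h3
  have hu : ContinuousOn u V := hsm.continuousOn
  have hcomp : ∀ m : Fin (n+1), ContinuousOn (fun x => u x m) V := fun m =>
    (EuclideanSpace.proj m : Ey n →L[ℝ] ℝ).continuous.comp_continuousOn hu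
  exact ((hcomp j).mul (h2 i)).sub ((hcomp i).mul (h2 j))

theorem mem_closedHalfDisc_zp {s y : ℝ} (hs0 : 0 ≤ s) (hs1 : s ≤ 1)
    (hy0 : 0 ≤ y) (hy1 : y ≤ Real.pi) : zp (s, y) ∈ closedHalfDisc 1 := by
  have e0 : Real.sin y ^ 2 + Real.cos y ^ 2 = 1 := Real.sin_sq_add_cos_sq y
  constructor
  · show (s * Real.cos y) ^ 2 + (s * Real.sin y) ^ 2 ≤ 1 ^ 2
    nlinarith [sq_nonneg s]
  · show 0 ≤ s * Real.sin y
    exact mul_nonneg hs0 (Real.sin_nonneg_of_nonneg_of_le_pi hy0 hy1)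

theorem mem_halfDisc_zp {s y : ℝ} (hs0 : 0 < s) (hs1 : s < 1)
    (hy0 : 0 < y) (hy1 : y < Real.pi) : zp (s, y) ∈ halfDisc 1 := by
  have e0 : Real.sin y ^ 2 + Real.cos y ^ 2 = 1 := Real.sin_sq_add_cos_sq y
  constructor
  · show (s * Real.cos y) ^ 2 + (s * Real.sin y) ^ 2 < 1 ^ 2
    nlinarith [sq_nonneg s]
  · show 0 < s * Real.sin y
    exact mul_pos hs0 (Real.sin_pos_of_pos_of_lt_pi hy0 hy1)

/-- On the free boundary the angular flux density vanishes. -/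
theorem Pf_Iseg {n : ℕ} {u : E2 → Ey n} (hu : IsFBHarmonic n u) (i j : Fin (n+1))
    {x : E2} (hx : x ∈ Iseg) : Pf u i j 1 x = 0 := by
  obtain ⟨c, hc⟩ := hu.free x hx
  unfold Pf
  rw [hc]
  simp [PiLp.smul_apply, smul_eq_mul]
  ring

/-- Divergence-free identity in polar coordinates. -/
theorem polarDivZero {n : ℕ} {u : E2 → Ey n} {V : Set E2} (hV : IsOpen V)
    (hsub : closedHalfDisc 1 ⊆ V) (hsm : ContDiffOn ℝ (⊤ : ℕ∞) u V)
    (hharm : ∀ x ∈ halfDisc 1, lapl u x = 0) (i j : Fin (n+1)) {p : ℝ × ℝ}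
    (hp1 : p.1 ∈ Ioo (0:ℝ) 1) (hp2 : p.2 ∈ Ioo 0 Real.pi) :
    DifferentiableAt ℝ (ff u i j) p ∧ DifferentiableAt ℝ (gg u i j) p ∧
      fderiv ℝ (ff u i j) p (1, 0) + fderiv ℝ (gg u i j) p (0, 1) = 0 := by
  have hmem : zp p ∈ halfDisc 1 := by
    have := mem_halfDisc_zp hp1.1 hp1.2 hp2.1 hp2.2
    simpa using this
  have hmemc : zp p ∈ closedHalfDisc 1 := ⟨hmem.1.le, hmem.2.le⟩
  have hxV : zp p ∈ V := hsub hmemc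
  obtain ⟨L0, hL0, hv0⟩ := hasFDerivAt_Pf hV hsm i j 0 hxV
  obtain ⟨L1, hL1, hv1⟩ := hasFDerivAt_Pf hV hsm i j 1 hxV
  obtain ⟨Lf, Lg, hFf, hGg, hsum⟩ := polar_div u i j hL0 hL1
  refine ⟨hFf.differentiableAt, hGg.differentiableAt, ?_⟩
  rw [hFf.fderiv, hGg.fderiv, hsum]
  have hlap : lapl u (zp p) = 0 := hharm _ hmem
  have hBB : fderiv ℝ (fderiv ℝ u) (zp p) (e2 0) (e2 0)
      + fderiv ℝ (fderiv ℝ u) (zp p) (e2 1) (e2 1) = 0 := by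
    rw [← lapl_eq hV hsm hxV]; exact hlap
  have hi' : fderiv ℝ (fderiv ℝ u) (zp p) (e2 0) (e2 0) i
      + fderiv ℝ (fderiv ℝ u) (zp p) (e2 1) (e2 1) i = 0 := by
    have := congrArg (fun v : Ey n => v i) hBB
    simpa [PiLp.add_apply] using this
  have hj' : fderiv ℝ (fderiv ℝ u) (zp p) (e2 0) (e2 0) j
      + fderiv ℝ (fderiv ℝ u) (zp p) (e2 1) (e2 1) j = 0 := by
    have := congrArg (fun v : Ey n => v j) hBB
    simpa [PiLp.add_apply] using this
  have : L0 (e2 0) + L1 (e2 1) = 0 := by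
    rw [hv0, hv1]
    linear_combination (u (zp p) j) * hi' - (u (zp p) i) * hj'
  rw [this, mul_zero]

/-- The integrand of the flux integral equals `ff` in polar coordinates. -/
theorem radial_eq {n : ℕ} (u : E2 → Ey n) (i j : Fin (n+1)) {r : ℝ} (hr : 0 < r) (θ : ℝ) :
    (u (pt (r * Real.cos θ) (r * Real.sin θ)) j
        * radialDeriv u (pt (r * Real.cos θ) (r * Real.sin θ)) i
      - u (pt (r * Real.cos θ) (r * Real.sin θ)) i
        * radialDeriv u (pt (r * Real.cos θ) (r * Real.sin θ)) j) * r
    = ff u i j (r, θ) := by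
  set z := pt (r * Real.cos θ) (r * Real.sin θ) with hz
  have hnorm : ‖z‖ = r := by
    rw [hz, norm_pt]
    have e0 : Real.sin θ ^ 2 + Real.cos θ ^ 2 = 1 := Real.sin_sq_add_cos_sq θ
    have : (r * Real.cos θ) ^ 2 + (r * Real.sin θ) ^ 2 = r ^ 2 := by nlinarith
    rw [this, Real.sqrt_sq hr.le]
  have hdir : ‖z‖⁻¹ • z = Real.cos θ • e2 0 + Real.sin θ • e2 1 := by
    rw [hnorm, hz, smul_pt]
    have h1 : r⁻¹ * (r * Real.cos θ) = Real.cos θ := by field_simp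
    have h2 : r⁻¹ * (r * Real.sin θ) = Real.sin θ := by field_simp
    rw [h1, h2, pt_eq]
  have hrad : ∀ m : Fin (n+1), radialDeriv u z m
      = Real.cos θ * fderiv ℝ u z (e2 0) m + Real.sin θ * fderiv ℝ u z (e2 1) m := by
    intro m
    unfold radialDeriv
    rw [hdir, map_add, (fderiv ℝ u z).map_smul, (fderiv ℝ u z).map_smul]
    simp [PiLp.add_apply, PiLp.smul_apply, smul_eq_mul]
  have hzp : zp (r, θ) = z := rfl
  unfold ff Pf
  rw [hzp, hrad i, hrad j]
  ring

/-- **Vanishing of angular-momentum flux through half-circles.** For a smooth harmonic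
map with free boundary `u` on `𝔻⁺ ∪ I`, for all components `i, j` and all `0 < r < 1`,
`∫₀^π (u_j ∂_ρ u_i − u_i ∂_ρ u_j)(r cos θ, r sin θ) r dθ = 0`. -/
theorem flux_vanishing_half_circles (n : ℕ) (hn : 2 ≤ n) (u : E2 → Ey n)
    (hu : IsFBHarmonic n u) :
    ∀ i j : Fin (n + 1), ∀ r : ℝ, 0 < r → r < 1 →
      (∫ θ in (0:ℝ)..Real.pi,
          (u (pt (r * Real.cos θ) (r * Real.sin θ)) j
              * radialDeriv u (pt (r * Real.cos θ) (r * Real.sin θ)) i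
            - u (pt (r * Real.cos θ) (r * Real.sin θ)) i
              * radialDeriv u (pt (r * Real.cos θ) (r * Real.sin θ)) j) * r) = 0 := by
  intro i j r hr hr1
  obtain ⟨V, hV, hsub, hsm⟩ := hu.smooth
  set F : ℝ → ℝ := fun s => ∫ θ in (0:ℝ)..Real.pi, ff u i j (s, θ) with hF
  -- Step 1: rewrite the statement integral as `F r`.
  have hstep1 : (∫ θ in (0:ℝ)..Real.pi,
      (u (pt (r * Real.cos θ) (r * Real.sin θ)) j
          * radialDeriv u (pt (r * Real.cos θ) (r * Real.sin θ)) i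
        - u (pt (r * Real.cos θ) (r * Real.sin θ)) i
          * radialDeriv u (pt (r * Real.cos θ) (r * Real.sin θ)) j) * r) = F r := by
    apply intervalIntegral.integral_congr
    intro θ _
    exact radial_eq u i j hr θ
  rw [hstep1]
  -- continuity facts
  have hzpV : ∀ {s y : ℝ}, 0 ≤ s → s ≤ 1 → 0 ≤ y → y ≤ Real.pi → zp (s, y) ∈ V :=
    fun hs0 hs1 hy0 hy1 => hsub (mem_closedHalfDisc_zp hs0 hs1 hy0 hy1)
  -- Step 2: F is constant on (0, r].
  have hstep2 : ∀ ε : ℝ, 0 < ε → ε ≤ r → F ε = F r := by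
    intro ε hε hεr
    have hε1 : ε < 1 := lt_of_le_of_lt hεr hr1
    -- continuity on the rectangle
    have hrect : Set.uIcc ε r ×ˢ Set.uIcc 0 Real.pi = Icc ε r ×ˢ Icc 0 Real.pi := by
      rw [uIcc_of_le hεr, uIcc_of_le Real.pi_pos.le]
    have hmaps : MapsTo zp (Icc ε r ×ˢ Icc 0 Real.pi) V := by
      rintro ⟨s, y⟩ ⟨⟨hs1, hs2⟩, ⟨hy1, hy2⟩⟩
      exact hzpV (hε.le.trans hs1) (hs2.trans hr1.le) hy1 hy2
    have hPfz : ∀ k : Fin 2, ContinuousOn (fun p => Pf u i j k (zp p))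
        (Icc ε r ×ˢ Icc 0 Real.pi) := fun k =>
      (continuousOn_Pf hV hsm i j k).comp continuous_zp.continuousOn hmaps
    have hcosc : Continuous (fun p : ℝ × ℝ => Real.cos p.2) :=
      Real.continuous_cos.comp continuous_snd
    have hsinc : Continuous (fun p : ℝ × ℝ => Real.sin p.2) :=
      Real.continuous_sin.comp continuous_snd
    have Hcf : ContinuousOn (ff u i j) (Set.uIcc ε r ×ˢ Set.uIcc 0 Real.pi) := by
      rw [hrect]
      exact (((hcosc.continuousOn.mul (hPfz 0)).add
        (hsinc.continuousOn.mul (hPfz 1))).mul continuous_fst.continuousOn)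
    have Hcg : ContinuousOn (gg u i j) (Set.uIcc ε r ×ˢ Set.uIcc 0 Real.pi) := by
      rw [hrect]
      exact ((hsinc.neg.continuousOn.mul (hPfz 0)).add
        (hcosc.continuousOn.mul (hPfz 1)))
    -- differentiability on the open rectangle
    have hdiff : ∀ p : ℝ × ℝ, p ∈ Ioo (0:ℝ) 1 ×ˢ Ioo 0 Real.pi →
        DifferentiableAt ℝ (ff u i j) p ∧ DifferentiableAt ℝ (gg u i j) p ∧
          fderiv ℝ (ff u i j) p (1, 0) + fderiv ℝ (gg u i j) p (0, 1) = 0 :=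
      fun p hp => polarDivZero hV hsub hsm hu.harmonic i j hp.1 hp.2
    have hsubset : Ioo ε r ×ˢ Ioo 0 Real.pi ⊆ Ioo (0:ℝ) 1 ×ˢ Ioo 0 Real.pi := by
      rintro ⟨s, y⟩ ⟨hs, hy⟩
      exact ⟨⟨hε.trans hs.1, hs.2.trans hr1⟩, hy⟩
    have Hdf : ∀ p ∈ Ioo (min ε r) (max ε r) ×ˢ Ioo (min 0 Real.pi) (max 0 Real.pi)
        \ (∅ : Set (ℝ × ℝ)),
        HasFDerivAt (ff u i j) (fderiv ℝ (ff u i j) p) p := by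
      intro p hp
      rw [min_eq_left hεr, max_eq_right hεr, min_eq_left Real.pi_pos.le,
        max_eq_right Real.pi_pos.le] at hp
      exact ((hdiff p (hsubset hp.1)).1).hasFDerivAt
    have Hdg : ∀ p ∈ Ioo (min ε r) (max ε r) ×ˢ Ioo (min 0 Real.pi) (max 0 Real.pi)
        \ (∅ : Set (ℝ × ℝ)),
        HasFDerivAt (gg u i j) (fderiv ℝ (gg u i j) p) p := by
      intro p hp
      rw [min_eq_left hεr, max_eq_right hεr, min_eq_left Real.pi_pos.le,
        max_eq_right Real.pi_pos.le] at hp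
      exact ((hdiff p (hsubset hp.1)).2.1).hasFDerivAt
    -- the a.e. null set of bad angles
    have hnull : volume ((univ : Set ℝ) ×ˢ ({0, Real.pi} : Set ℝ)) = 0 := by
      rw [Measure.volume_eq_prod, Measure.prod_prod]
      have : volume ({0, Real.pi} : Set ℝ) = 0 :=
        measure_union_null (measure_singleton 0) (measure_singleton Real.pi)
      rw [this, mul_zero]
    have haeN : ∀ᵐ p : ℝ × ℝ, p ∉ (univ : Set ℝ) ×ˢ ({0, Real.pi} : Set ℝ) :=
      measure_eq_zero_iff_ae_notMem.mp hnull
    -- integrability of the (a.e. zero) divergence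
    have Hi : IntegrableOn
        (fun p => fderiv ℝ (ff u i j) p (1, 0) + fderiv ℝ (gg u i j) p (0, 1))
        (Set.uIcc ε r ×ˢ Set.uIcc 0 Real.pi) := by
      rw [hrect, IntegrableOn]
      apply (integrable_zero _ _ _).congr
      have hmeas : MeasurableSet (Icc ε r ×ˢ Icc 0 Real.pi : Set (ℝ × ℝ)) :=
        measurableSet_Icc.prod measurableSet_Icc
      filter_upwards [ae_restrict_mem hmeas, ae_restrict_of_ae haeN] with p hp hnp
      have hy : p.2 ∈ Ioo (0:ℝ) Real.pi := by
        rcases hp.2 with ⟨hy1, hy2⟩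
        rcases lt_or_eq_of_le hy1 with h | h
        · rcases lt_or_eq_of_le hy2 with h' | h'
          · exact ⟨h, h'⟩
          · exact absurd ⟨mem_univ _, by simp [h']⟩ hnp
        · exact absurd ⟨mem_univ _, by simp [← h]⟩ hnp
      have hx : p.1 ∈ Ioo (0:ℝ) 1 := ⟨hε.trans_le hp.1.1, lt_of_le_of_lt hp.1.2 hr1⟩
      exact ((hdiff p ⟨hx, hy⟩).2.2).symm
    have := integral2_divergence_prod_of_hasFDerivAt_off_countable
      (ff u i j) (gg u i j) (fun p => fderiv ℝ (ff u i j) p)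
      (fun p => fderiv ℝ (gg u i j) p) ε 0 r Real.pi ∅ countable_empty
      Hcf Hcg Hdf Hdg Hi
    -- LHS is zero
    have hLHS : (∫ x in ε..r, ∫ y in (0:ℝ)..Real.pi,
        fderiv ℝ (ff u i j) (x, y) (1, 0) + fderiv ℝ (gg u i j) (x, y) (0, 1)) = 0 := by
      have : EqOn (fun x => ∫ y in (0:ℝ)..Real.pi,
          fderiv ℝ (ff u i j) (x, y) (1, 0) + fderiv ℝ (gg u i j) (x, y) (0, 1))
          (fun _ => (0:ℝ)) (Set.uIcc ε r) := by
        intro x hx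
        rw [uIcc_of_le hεr] at hx
        have hx' : x ∈ Ioo (0:ℝ) 1 := ⟨hε.trans_le hx.1, lt_of_le_of_lt hx.2 hr1⟩
        show (∫ y in (0:ℝ)..Real.pi,
          fderiv ℝ (ff u i j) (x, y) (1, 0) + fderiv ℝ (gg u i j) (x, y) (0, 1)) = 0
        refine (intervalIntegral.integral_congr_ae (g := fun _ => (0:ℝ)) ?_).trans (by simp)
        have hpi : ∀ᵐ y : ℝ, y ≠ Real.pi := by
          have : volume ({Real.pi} : Set ℝ) = 0 := measure_singleton _
          exact measure_eq_zero_iff_ae_notMem.mp this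
        filter_upwards [hpi] with y hy hymem
        rw [uIoc_of_le Real.pi_pos.le] at hymem
        have hy' : y ∈ Ioo (0:ℝ) Real.pi := ⟨hymem.1, lt_of_le_of_ne hymem.2 hy⟩
        exact (hdiff (x, y) ⟨hx', hy'⟩).2.2
      rw [intervalIntegral.integral_congr this]
      simp
    -- boundary angular terms vanish
    have hgg0 : (∫ x in ε..r, gg u i j (x, 0)) = 0 := by
      have : EqOn (fun x => gg u i j (x, 0)) (fun _ => (0:ℝ)) (Set.uIcc ε r) := by
        intro x hx
        rw [uIcc_of_le hεr] at hx
        have hx1 : |x| < 1 := by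
          rw [abs_of_pos (hε.trans_le hx.1)]
          exact lt_of_le_of_lt hx.2 hr1
        have hIseg : zp (x, 0) ∈ Iseg := by
          constructor
          · show |x * Real.cos 0| < 1
            simpa using hx1
          · show x * Real.sin 0 = 0
            simp
        show gg u i j (x, 0) = 0
        unfold gg
        simp [Pf_Iseg hu i j hIseg]
      rw [intervalIntegral.integral_congr this]
      simp
    have hggpi : (∫ x in ε..r, gg u i j (x, Real.pi)) = 0 := by
      have : EqOn (fun x => gg u i j (x, Real.pi)) (fun _ => (0:ℝ)) (Set.uIcc ε r) := by
        intro x hx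
        rw [uIcc_of_le hεr] at hx
        have hx1 : |x| < 1 := by
          rw [abs_of_pos (hε.trans_le hx.1)]
          exact lt_of_le_of_lt hx.2 hr1
        have hIseg : zp (x, Real.pi) ∈ Iseg := by
          constructor
          · show |x * Real.cos Real.pi| < 1
            simpa using hx1
          · show x * Real.sin Real.pi = 0
            simp
        show gg u i j (x, Real.pi) = 0
        unfold gg
        simp [Pf_Iseg hu i j hIseg]
      rw [intervalIntegral.integral_congr this]
      simp
    rw [hLHS, hgg0, hggpi] at this
    have : (0:ℝ) = (∫ y in (0:ℝ)..Real.pi, ff u i j (r, y))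
        - ∫ y in (0:ℝ)..Real.pi, ff u i j (ε, y) := by linarith [this]
    simp only [hF]
    linarith [this]
  -- Step 3: bound F near 0 and conclude F r = 0.
  have hcpt : IsCompact (closedHalfDisc 1) := by
    have hclosed : IsClosed (closedHalfDisc 1) := by
      have h0 : Continuous (fun x : E2 => x 0 ^ 2 + x 1 ^ 2) := by
        have c0 : Continuous (fun x : E2 => x 0) :=
          (EuclideanSpace.proj (0 : Fin 2) : E2 →L[ℝ] ℝ).continuous
        have c1 : Continuous (fun x : E2 => x 1) :=
          (EuclideanSpace.proj (1 : Fin 2) : E2 →L[ℝ] ℝ).continuous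
        fun_prop
      have c1 : Continuous (fun x : E2 => x 1) :=
        (EuclideanSpace.proj (1 : Fin 2) : E2 →L[ℝ] ℝ).continuous
      exact (isClosed_le h0 continuous_const).inter (isClosed_le continuous_const c1)
    have hbdd : Bornology.IsBounded (closedHalfDisc 1) := by
      apply Bornology.IsBounded.subset (Metric.isBounded_closedBall (x := (0:E2)) (r := 2))
      intro x hx
      have h1 : x 0 ^ 2 + x 1 ^ 2 ≤ 1 ^ 2 := hx.1
      have hxn : ‖x‖ = Real.sqrt (x 0 ^ 2 + x 1 ^ 2) := by
        simp [EuclideanSpace.norm_eq, Fin.sum_univ_two]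
      rw [Metric.mem_closedBall, dist_zero_right, hxn]
      calc Real.sqrt (x 0 ^ 2 + x 1 ^ 2) ≤ Real.sqrt (1^2) := Real.sqrt_le_sqrt h1
        _ ≤ 2 := by rw [one_pow, Real.sqrt_one]; norm_num
    exact Metric.isCompact_of_isClosed_isBounded hclosed hbdd
  obtain ⟨C0, hC0⟩ := hcpt.exists_bound_of_continuousOn
    ((continuousOn_Pf hV hsm i j 0).mono hsub)
  obtain ⟨C1, hC1⟩ := hcpt.exists_bound_of_continuousOn
    ((continuousOn_Pf hV hsm i j 1).mono hsub)
  have hC0' : 0 ≤ C0 := le_trans (norm_nonneg _) (hC0 _ (mem_closedHalfDisc_zp le_rfl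
    zero_le_one le_rfl Real.pi_pos.le))
  have hbound : ∀ ε : ℝ, 0 < ε → ε ≤ r → |F r| ≤ (C0 + C1) * ε * Real.pi := by
    intro ε hε hεr
    rw [← hstep2 ε hε hεr]
    have : ‖F ε‖ ≤ ((C0 + C1) * ε) * |Real.pi - 0| := by
      apply intervalIntegral.norm_integral_le_of_norm_le_const
      intro y hy
      rw [uIoc_of_le Real.pi_pos.le] at hy
      have hmem : zp (ε, y) ∈ closedHalfDisc 1 :=
        mem_closedHalfDisc_zp hε.le (hεr.trans hr1.le) hy.1.le hy.2
      have b0 := hC0 _ hmem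
      have b1 := hC1 _ hmem
      rw [Real.norm_eq_abs] at b0 b1 ⊢
      unfold ff
      rw [abs_mul]
      have habs : |Real.cos y * Pf u i j 0 (zp (ε, y)) + Real.sin y * Pf u i j 1 (zp (ε, y))|
          ≤ C0 + C1 := by
        calc |Real.cos y * Pf u i j 0 (zp (ε, y)) + Real.sin y * Pf u i j 1 (zp (ε, y))|
            ≤ |Real.cos y * Pf u i j 0 (zp (ε, y))| + |Real.sin y * Pf u i j 1 (zp (ε, y))| :=
              abs_add_le _ _
          _ ≤ C0 + C1 := by
              rw [abs_mul, abs_mul]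
              have h1 : |Real.cos y| ≤ 1 := Real.abs_cos_le_one y
              have h2 : |Real.sin y| ≤ 1 := Real.abs_sin_le_one y
              have := abs_nonneg (Pf u i j 0 (zp (ε, y)))
              have := abs_nonneg (Pf u i j 1 (zp (ε, y)))
              nlinarith
      rw [abs_of_pos hε]
      exact mul_le_mul_of_nonneg_right habs hε.le
    rw [Real.norm_eq_abs] at this
    calc |F ε| ≤ ((C0 + C1) * ε) * |Real.pi - 0| := this
      _ = (C0 + C1) * ε * Real.pi := by rw [sub_zero, abs_of_pos Real.pi_pos]
  -- conclude
  have htend : Tendsto (fun ε : ℝ => (C0 + C1) * ε * Real.pi) (𝓝[>] 0) (𝓝 0) := by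
    have hc : Continuous (fun ε : ℝ => (C0 + C1) * ε * Real.pi) := by continuity
    have h2 := (hc.tendsto 0).mono_left (nhdsWithin_le_nhds (s := Ioi (0:ℝ)))
    simpa using h2
  have hev : ∀ᶠ ε in 𝓝[>] (0:ℝ), |F r| ≤ (C0 + C1) * ε * Real.pi := by
    filter_upwards [Ioc_mem_nhdsGT_of_mem ⟨le_rfl, hr⟩] with ε hε
    exact hbound ε hε.1 hε.2
  have : |F r| ≤ 0 := ge_of_tendsto htend hev
  have : |F r| = 0 := le_antisymm this (abs_nonneg _)
  exact abs_eq_zero.mp this
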